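/- For every simple graph G, the total graph T(G) is isomorphic to H², where H is the graph obtained from G by subdividing every edge of G exactly once. -/
import Mathlib


open SimpleGraph

attribute [local instance] Classical.propDecidable

/-- The total graph of `G`: vertices are the vertices and edges of `G`, with adjacency
given by adjacency or incidence in `G`. -/
def totalGraph {V : Type} (G : SimpleGraph V) : SimpleGraph (V ⊕ G.edgeSet) :=
  SimpleGraph.fromRel (fun x y => match x, y with
    | Sum.inl u, Sum.inl v => G.Adj u v
    | Sum.inl u, Sum.inr e => u ∈ (e : Sym2 V)
    | Sum.inr _, Sum.inl _ => False
    | Sum.inr e, Sum.inr f => ∃ u, u ∈ (e : Sym2 V) ∧ u ∈ (f : Sym2 V))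

/-- The subdivision of `G`: every edge of `G` is subdivided exactly once; the new vertex on
edge `e` is `Sum.inr e`, adjacent to exactly the endpoints of `e`. -/
def subdivision {V : Type} (G : SimpleGraph V) : SimpleGraph (V ⊕ G.edgeSet) :=
  SimpleGraph.fromRel (fun x y => match x, y with
    | Sum.inl v, Sum.inr e => v ∈ (e : Sym2 V)
    | _, _ => False)

/-- The `p`-th power of `G`: same vertices, edges between distinct vertices at distance
at most `p` in `G`. -/
def graphPow {V : Type} (G : SimpleGraph V) (p : ℕ) : SimpleGraph V :=
  SimpleGraph.fromRel (fun u v => G.Reachable u v ∧ G.dist u v ≤ p)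

lemma subdivision_adj {V : Type} (G : SimpleGraph V) (x y : V ⊕ G.edgeSet) :
    (subdivision G).Adj x y ↔ ∃ (v : V) (e : G.edgeSet), v ∈ (e : Sym2 V) ∧
      ((x = Sum.inl v ∧ y = Sum.inr e) ∨ (x = Sum.inr e ∧ y = Sum.inl v)) := by
  rcases x with u | e <;> rcases y with v | f <;>
    simp [subdivision, SimpleGraph.fromRel_adj] <;> aesop

lemma subdivision_adj_inl_inr {V : Type} (G : SimpleGraph V) (v : V) (e : G.edgeSet)
    (h : v ∈ (e : Sym2 V)) : (subdivision G).Adj (Sum.inl v) (Sum.inr e) := by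
  rw [subdivision_adj]; exact ⟨v, e, h, Or.inl ⟨rfl, rfl⟩⟩

theorem total_graph_iso_subdivision_square {V : Type} (G : SimpleGraph V) :
    Nonempty (totalGraph G ≃g graphPow (subdivision G) 2) := by
  refine ⟨⟨Equiv.refl _, ?_⟩⟩
  intro x y
  simp only [Equiv.refl_apply]
  have key : ∀ x y : V ⊕ G.edgeSet, x ≠ y →
      ((subdivision G).Reachable x y ∧ (subdivision G).dist x y ≤ 2 ↔
        ((match x, y with
          | Sum.inl u, Sum.inl v => G.Adj u v
          | Sum.inl u, Sum.inr e => u ∈ (e : Sym2 V)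
          | Sum.inr _, Sum.inl _ => False
          | Sum.inr e, Sum.inr f => ∃ u, u ∈ (e : Sym2 V) ∧ u ∈ (f : Sym2 V)) ∨
        (match y, x with
          | Sum.inl u, Sum.inl v => G.Adj u v
          | Sum.inl u, Sum.inr e => u ∈ (e : Sym2 V)
          | Sum.inr _, Sum.inl _ => False
          | Sum.inr e, Sum.inr f => ∃ u, u ∈ (e : Sym2 V) ∧ u ∈ (f : Sym2 V)))) := by
    intro x y hne
    constructor
    · rintro ⟨hr, hd⟩
      obtain ⟨p, hp⟩ := hr.exists_walk_length_eq_dist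
      have hd' : p.length ≤ 2 := by omega
      clear hp hd
      match p, hd' with
      | SimpleGraph.Walk.nil, _ => exact absurd rfl hne
      | SimpleGraph.Walk.cons h SimpleGraph.Walk.nil, _ =>
        -- x adjacent to y in subdivision
        rw [subdivision_adj] at h
        obtain ⟨v, e, hv, (⟨rfl, rfl⟩ | ⟨rfl, rfl⟩)⟩ := h
        · exact Or.inl hv
        · exact Or.inr hv
      | SimpleGraph.Walk.cons (w := w) h1 (SimpleGraph.Walk.cons h2 SimpleGraph.Walk.nil), _ =>
        rw [subdivision_adj] at h1 h2
        obtain ⟨v1, e1, hv1, h1'⟩ := h1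
        obtain ⟨v2, e2, hv2, h2'⟩ := h2
        rcases h1' with ⟨rfl, rfl⟩ | ⟨rfl, rfl⟩ <;>
          rcases h2' with ⟨he, rfl⟩ | ⟨he, rfl⟩
        · simp at he
        · -- x = inl v1, w = inr e1 = inr e2, y = inl v2
          rw [Sum.inr.injEq] at he
          subst he
          have hne' : v1 ≠ v2 := fun h => hne (by rw [h])
          left
          have := (Sym2.mem_and_mem_iff hne').mp ⟨hv1, hv2⟩
          have he1 := e1.2
          rw [this] at he1
          exact he1
        · -- x = inr e1, w = inl v1 = inl v2, y = inr e2
          rw [Sum.inl.injEq] at he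
          subst he
          exact Or.inl ⟨v1, hv1, hv2⟩
        · simp at he
      | SimpleGraph.Walk.cons _ (SimpleGraph.Walk.cons _ (SimpleGraph.Walk.cons _ _)), hd =>
        simp only [SimpleGraph.Walk.length_cons] at hd; omega
    · intro h
      have main : ∀ x y : V ⊕ G.edgeSet, (match x, y with
          | Sum.inl u, Sum.inl v => G.Adj u v
          | Sum.inl u, Sum.inr e => u ∈ (e : Sym2 V)
          | Sum.inr _, Sum.inl _ => False
          | Sum.inr e, Sum.inr f => ∃ u, u ∈ (e : Sym2 V) ∧ u ∈ (f : Sym2 V)) →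
          (subdivision G).Reachable x y ∧ (subdivision G).dist x y ≤ 2 := by
        rintro (u | e) (v | f) h
        · -- G.Adj u v
          have he : s(u, v) ∈ G.edgeSet := h
          have h1 := subdivision_adj_inl_inr G u ⟨_, he⟩ (Sym2.mem_mk_left u v)
          have h2 := subdivision_adj_inl_inr G v ⟨_, he⟩ (Sym2.mem_mk_right u v)
          exact ⟨⟨.cons h1 (.cons h2.symm .nil)⟩,
            (SimpleGraph.dist_le (.cons h1 (.cons h2.symm .nil))).trans (by simp)⟩
        · have h1 := subdivision_adj_inl_inr G u f h
          exact ⟨⟨.cons h1 .nil⟩, (SimpleGraph.dist_le (.cons h1 .nil)).trans (by simp)⟩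
        · exact h.elim
        · obtain ⟨u, hu1, hu2⟩ := h
          have h1 := subdivision_adj_inl_inr G u e hu1
          have h2 := subdivision_adj_inl_inr G u f hu2
          exact ⟨⟨.cons h1.symm (.cons h2 .nil)⟩,
            (SimpleGraph.dist_le (.cons h1.symm (.cons h2 .nil))).trans (by simp)⟩
      rcases h with h | h
      · exact main x y h
      · obtain ⟨hr, hd⟩ := main y x h
        exact ⟨hr.symm, by rwa [SimpleGraph.dist_comm]⟩
  constructor
  · intro h
    rw [graphPow, SimpleGraph.fromRel_adj] at h
    obtain ⟨hne, h | h⟩ := h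
    · rw [totalGraph, SimpleGraph.fromRel_adj]
      exact ⟨hne, (key x y hne).mp h⟩
    · rw [totalGraph, SimpleGraph.fromRel_adj]
      have := (key y x (Ne.symm hne)).mp h
      exact ⟨hne, this.symm⟩
  · intro h
    rw [totalGraph, SimpleGraph.fromRel_adj] at h
    obtain ⟨hne, h⟩ := h
    rw [graphPow, SimpleGraph.fromRel_adj]
    exact ⟨hne, Or.inl ((key x y hne).mpr h)⟩
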